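/- For β ∈ (0,1) and ξ ≥ 0 define Y(ξ,β) := 2·cos²(πβ/2)·cosh(πξ/2)/( cos²(πβ/2) + sinh²(πξ/2) ), and for Y₀ ∈ (0,2] define X̂₀(Y₀,β) := sqrt( 2·( sqrt( cos⁴(πβ/2) + sin²(πβ/2)·Y₀² ) + cos²(πβ/2) ) − Y₀² ). Then: (i) for each β, the map ξ ↦ Y(ξ,β) is strictly decreasing on [0,∞), with Y(0,β) = 2 and Y(ξ,β) → 0 as ξ → ∞; (ii) for each Y₀ ∈ (0,2], the unique ξ₀ = ξ₀(Y₀,β) ∈ [0,∞) with Y(ξ₀,β) = Y₀ satisfies sinh(π·ξ₀/2) = ( cos(πβ/2)/Y₀ )·X̂₀(Y₀,β); (iii) setting h(β) := (4/π)·tan²(πβ/2)·sec(πβ/2) and X̃₀(Y₀,β) := ξ₀(Y₀,β)/h(β) + X̂₀(Y₀,β), one has X̃₀(Y₀,β) → sqrt(2Y₀ − Y₀²) as β → 1⁻, uniformly for Y₀ in compact subsets of (0,2]. -/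

import Mathlib

open Set Filter

/-- The rescaled height `Y(ξ,β)` of the surface of the explicit zero-gravity solitary wave. -/
noncomputable def Yfun (β ξ : ℝ) : ℝ :=
  2 * Real.cos (Real.pi * β / 2) ^ 2 * Real.cosh (Real.pi * ξ / 2) /
    (Real.cos (Real.pi * β / 2) ^ 2 + Real.sinh (Real.pi * ξ / 2) ^ 2)

/-- The function `X̂₀(Y₀,β)`. -/
noncomputable def Xhat (β Y₀ : ℝ) : ℝ :=
  Real.sqrt (2 * (Real.sqrt (Real.cos (Real.pi * β / 2) ^ 4 +
    Real.sin (Real.pi * β / 2) ^ 2 * Y₀ ^ 2) + Real.cos (Real.pi * β / 2) ^ 2) - Y₀ ^ 2)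

/-- The normalization `h(β) = (4/π)·tan²(πβ/2)·sec(πβ/2)`. -/
noncomputable def hCNK (β : ℝ) : ℝ :=
  4 / Real.pi * Real.tan (Real.pi * β / 2) ^ 2 / Real.cos (Real.pi * β / 2)

lemma hc_pos {β : ℝ} (h0 : 0 < β) (h1 : β < 1) : 0 < Real.cos (Real.pi * β / 2) := by
  apply Real.cos_pos_of_mem_Ioo
  constructor <;> nlinarith [Real.pi_pos]

lemma hs_pos {β : ℝ} (h0 : 0 < β) (h1 : β < 1) : 0 < Real.sin (Real.pi * β / 2) := by
  apply Real.sin_pos_of_pos_of_lt_pi <;> nlinarith [Real.pi_pos]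

lemma yfun_anti {β : ℝ} (h0 : 0 < β) (h1 : β < 1) : StrictAntiOn (Yfun β) (Ici (0:ℝ)) := by
  have hc : 0 < Real.cos (Real.pi * β / 2) := hc_pos h0 h1
  have hc1 : Real.cos (Real.pi * β / 2) ≤ 1 := Real.cos_le_one _
  intro x hx y hy hxy
  have hux : Real.cosh (Real.pi * x / 2) < Real.cosh (Real.pi * y / 2) := by
    rw [Real.cosh_lt_cosh, abs_of_nonneg (by nlinarith [Real.pi_pos, mem_Ici.mp hx]),
      abs_of_nonneg (by nlinarith [Real.pi_pos, mem_Ici.mp hx, mem_Ici.mp hy])]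
    nlinarith [Real.pi_pos, mem_Ici.mp hx]
  have h1x : 1 ≤ Real.cosh (Real.pi * x / 2) := Real.one_le_cosh _
  have h1y : 1 ≤ Real.cosh (Real.pi * y / 2) := Real.one_le_cosh _
  have hsx : Real.sinh (Real.pi * x / 2) ^ 2 = Real.cosh (Real.pi * x / 2) ^ 2 - 1 := Real.sinh_sq _
  have hsy : Real.sinh (Real.pi * y / 2) ^ 2 = Real.cosh (Real.pi * y / 2) ^ 2 - 1 := Real.sinh_sq _
  unfold Yfun
  rw [div_lt_div_iff₀ (by nlinarith) (by nlinarith), hsx, hsy]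
  have key : 0 < 2 * Real.cos (Real.pi * β / 2) ^ 2 *
      ((Real.cosh (Real.pi * y / 2) - Real.cosh (Real.pi * x / 2)) *
        (Real.cosh (Real.pi * x / 2) * Real.cosh (Real.pi * y / 2) + 1 - Real.cos (Real.pi * β / 2) ^ 2)) := by
    have h2 : 0 < Real.cosh (Real.pi * y / 2) - Real.cosh (Real.pi * x / 2) := sub_pos.mpr hux
    have h3 : 0 < Real.cosh (Real.pi * x / 2) * Real.cosh (Real.pi * y / 2) + 1 -
        Real.cos (Real.pi * β / 2) ^ 2 := by nlinarith
    positivity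
  nlinarith [key]

lemma yfun_zero {β : ℝ} (h0 : 0 < β) (h1 : β < 1) : Yfun β 0 = 2 := by
  have hc : 0 < Real.cos (Real.pi * β / 2) := hc_pos h0 h1
  unfold Yfun
  rw [mul_zero, zero_div, Real.sinh_zero, Real.cosh_zero]
  field_simp
  ring

lemma yfun_tendsto {β : ℝ} (h0 : 0 < β) (h1 : β < 1) : Tendsto (Yfun β) atTop (nhds 0) := by
  have hc : 0 < Real.cos (Real.pi * β / 2) := hc_pos h0 h1
  set c := Real.cos (Real.pi * β / 2) with hcdef
  have hc1 : c ≤ 1 := Real.cos_le_one _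
  -- the map u ↦ 2c²u/(u²-(1-c²)) tends to 0 at top
  have key : Tendsto (fun u : ℝ => 2 * c ^ 2 * u / (c ^ 2 + (u ^ 2 - 1))) atTop (nhds 0) := by
    have h1 : Tendsto (fun u : ℝ => u - (1 - c ^ 2) / u) atTop atTop := by
      have hev : (fun u : ℝ => u - 1) ≤ᶠ[atTop] fun u : ℝ => u - (1 - c ^ 2) / u := by
        filter_upwards [eventually_ge_atTop (1:ℝ)] with u hu
        have hu0 : 0 < u := by linarith
        have : (1 - c^2)/u ≤ 1 := by
          rw [div_le_one hu0]; nlinarith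
        show u - 1 ≤ u - (1 - c ^ 2) / u
        linarith
      exact tendsto_atTop_mono' atTop hev (tendsto_atTop_add_const_right _ _ tendsto_id)
    have h2 : Tendsto (fun u : ℝ => 2 * c ^ 2 / (u - (1 - c ^ 2) / u)) atTop (nhds 0) :=
      Tendsto.div_atTop tendsto_const_nhds h1
    apply h2.congr'
    filter_upwards [eventually_ge_atTop (1:ℝ)] with u hu
    have hu0 : u ≠ 0 := by positivity
    have hden : c ^ 2 + (u ^ 2 - 1) ≠ 0 := by nlinarith
    have huu : u - (1 - c ^ 2) / u = (c ^ 2 + (u ^ 2 - 1)) / u := by field_simp; ring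
    rw [huu, div_div_eq_mul_div]
  have hcomp : Tendsto (fun ξ : ℝ => Real.cosh (Real.pi * ξ / 2)) atTop atTop := by
    have hexp : Tendsto (fun ξ : ℝ => Real.exp (Real.pi * ξ / 2) / 2) atTop atTop :=
      (Real.tendsto_exp_atTop.comp
        (Tendsto.atTop_div_const two_pos
          (Tendsto.const_mul_atTop Real.pi_pos tendsto_id))).atTop_div_const two_pos
    apply tendsto_atTop_mono _ hexp
    intro ξ
    have := Real.exp_pos (-(Real.pi * ξ / 2))
    rw [Real.cosh_eq]
    linarith
  have := key.comp hcomp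
  apply this.congr
  intro ξ
  simp only [Function.comp]
  unfold Yfun
  rw [Real.sinh_sq]

noncomputable def xiD (Y₀ β : ℝ) : ℝ :=
  2 / Real.pi * Real.arsinh (Real.cos (Real.pi * β / 2) / Y₀ * Xhat β Y₀)

lemma Xhat_sq {β Y₀ : ℝ} (h0 : 0 < β) (h1 : β < 1) (hY0 : 0 < Y₀) (hY2 : Y₀ ≤ 2) :
    Xhat β Y₀ ^ 2 = 2 * (Real.sqrt (Real.cos (Real.pi * β / 2) ^ 4 +
      Real.sin (Real.pi * β / 2) ^ 2 * Y₀ ^ 2) + Real.cos (Real.pi * β / 2) ^ 2) - Y₀ ^ 2 := by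
  have hc : 0 < Real.cos (Real.pi * β / 2) := hc_pos h0 h1
  have hσ : 0 < Real.sin (Real.pi * β / 2) := hs_pos h0 h1
  set c := Real.cos (Real.pi * β / 2)
  set σ := Real.sin (Real.pi * β / 2)
  have hcs : σ ^ 2 + c ^ 2 = 1 := Real.sin_sq_add_cos_sq _
  set S := Real.sqrt (c ^ 4 + σ ^ 2 * Y₀ ^ 2) with hSdef
  have hS0 : 0 ≤ S := Real.sqrt_nonneg _
  have hS2 : S ^ 2 = c ^ 4 + σ ^ 2 * Y₀ ^ 2 := Real.sq_sqrt (by positivity)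
  have hS2' : S ^ 2 = c ^ 4 + (1 - c ^ 2) * Y₀ ^ 2 := by
    linear_combination hS2 + Y₀ ^ 2 * hcs
  have harg : 0 ≤ 2 * (S + c ^ 2) - Y₀ ^ 2 := by
    rcases le_or_gt (Y₀ ^ 2 / 2 - c ^ 2) 0 with ht | ht
    · nlinarith
    · nlinarith [mul_nonneg (sq_nonneg Y₀) (show (0:ℝ) ≤ 4 - Y₀ ^ 2 by nlinarith), hS2', ht, hS0]
  exact Real.sq_sqrt harg

lemma xiD_spec {β Y₀ : ℝ} (h0 : 0 < β) (h1 : β < 1) (hY0 : 0 < Y₀) (hY2 : Y₀ ≤ 2) :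
    0 ≤ xiD Y₀ β ∧ Yfun β (xiD Y₀ β) = Y₀ ∧
    Real.sinh (Real.pi * xiD Y₀ β / 2) = Real.cos (Real.pi * β / 2) / Y₀ * Xhat β Y₀ := by
  have hc : 0 < Real.cos (Real.pi * β / 2) := hc_pos h0 h1
  have hσ : 0 < Real.sin (Real.pi * β / 2) := hs_pos h0 h1
  have hX2 := Xhat_sq h0 h1 hY0 hY2
  have hXnn : 0 ≤ Xhat β Y₀ := Real.sqrt_nonneg _
  set c := Real.cos (Real.pi * β / 2)
  set σ := Real.sin (Real.pi * β / 2)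
  have hcs : σ ^ 2 + c ^ 2 = 1 := Real.sin_sq_add_cos_sq _
  set S := Real.sqrt (c ^ 4 + σ ^ 2 * Y₀ ^ 2) with hSdef
  have hS0 : 0 ≤ S := Real.sqrt_nonneg _
  have hS2 : S ^ 2 = c ^ 4 + σ ^ 2 * Y₀ ^ 2 :=
    Real.sq_sqrt (show (0:ℝ) ≤ c ^ 4 + σ ^ 2 * Y₀ ^ 2 by positivity)
  have hπ : Real.pi ≠ 0 := Real.pi_ne_zero
  have hA : Real.pi * xiD Y₀ β / 2 = Real.arsinh (c / Y₀ * Xhat β Y₀) := by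
    unfold xiD; field_simp
    congr 1; rw [mul_comm]
  have hsinh : Real.sinh (Real.pi * xiD Y₀ β / 2) = c / Y₀ * Xhat β Y₀ := by
    rw [hA, Real.sinh_arsinh]
  have hxinn : 0 ≤ xiD Y₀ β := by
    unfold xiD
    apply mul_nonneg (by positivity)
    rw [Real.arsinh_nonneg_iff]
    positivity
  have hsq : (c / Y₀ * Xhat β Y₀) ^ 2 + 1 = ((S + c ^ 2) / Y₀) ^ 2 := by
    field_simp
    linear_combination c ^ 2 * hX2 - hS2 - Y₀ ^ 2 * hcs
  have hcosh : Real.cosh (Real.pi * xiD Y₀ β / 2) = (S + c ^ 2) / Y₀ := by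
    rw [← Real.sqrt_sq (Real.cosh_pos _).le, Real.cosh_sq, hsinh, hsq,
      Real.sqrt_sq (by positivity)]
  refine ⟨hxinn, ?_, hsinh⟩
  unfold Yfun
  rw [hsinh, hcosh]
  have hden : c ^ 2 + (c / Y₀ * Xhat β Y₀) ^ 2 = 2 * c ^ 2 * (S + c ^ 2) / Y₀ ^ 2 := by
    field_simp
    linear_combination hX2
  rw [hden]
  have hSc : 0 < S + c ^ 2 := by positivity
  field_simp
  ring

lemma abs_sqrt_sub_sqrt_le {A B : ℝ} (hA : 0 ≤ A) (hB : 0 ≤ B) :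
    |Real.sqrt A - Real.sqrt B| ≤ Real.sqrt |A - B| := by
  wlog h : B ≤ A generalizing A B
  · rw [abs_sub_comm, abs_sub_comm A B]; exact this hB hA (le_of_not_ge h)
  rw [abs_of_nonneg (sub_nonneg.mpr (Real.sqrt_le_sqrt h)), abs_of_nonneg (sub_nonneg.mpr h)]
  have h1 : Real.sqrt A ≤ Real.sqrt B + Real.sqrt (A - B) := by
    rw [← Real.sqrt_sq (by positivity : (0:ℝ) ≤ Real.sqrt B + Real.sqrt (A - B))]
    apply Real.sqrt_le_sqrt
    have hb := Real.sq_sqrt hB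
    have hab := Real.sq_sqrt (sub_nonneg.mpr h)
    nlinarith [mul_nonneg (Real.sqrt_nonneg B) (Real.sqrt_nonneg (A - B))]
  linarith

set_option maxHeartbeats 2000000 in
lemma xiD_bound {β Y₀ a : ℝ} (h0 : 0 < β) (h1 : β < 1) (ha : 0 < a) (ha2 : a ≤ 2)
    (hYa : a ≤ Y₀) (hY2 : Y₀ ≤ 2) (hc12 : Real.cos (Real.pi * β / 2) ≤ 1 / 2) :
    |xiD Y₀ β / hCNK β + Xhat β Y₀ - Real.sqrt (2 * Y₀ - Y₀ ^ 2)|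
      ≤ Real.cos (Real.pi * β / 2) * (2 / a + Real.sqrt (4 / a + 6)) := by
  have hc : 0 < Real.cos (Real.pi * β / 2) := hc_pos h0 h1
  have hσ : 0 < Real.sin (Real.pi * β / 2) := hs_pos h0 h1
  have hY0 : 0 < Y₀ := lt_of_lt_of_le ha hYa
  have hX2 := Xhat_sq h0 h1 hY0 hY2
  have hXnn : 0 ≤ Xhat β Y₀ := Real.sqrt_nonneg _
  set c := Real.cos (Real.pi * β / 2)
  set σ := Real.sin (Real.pi * β / 2)
  have hcs : σ ^ 2 + c ^ 2 = 1 := Real.sin_sq_add_cos_sq _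
  set S := Real.sqrt (c ^ 4 + σ ^ 2 * Y₀ ^ 2) with hSdef
  have hS0 : 0 ≤ S := Real.sqrt_nonneg _
  have hS2 : S ^ 2 = c ^ 4 + σ ^ 2 * Y₀ ^ 2 :=
    Real.sq_sqrt (show (0:ℝ) ≤ c ^ 4 + σ ^ 2 * Y₀ ^ 2 by positivity)
  have hσ2 : 3 / 4 ≤ σ ^ 2 := by nlinarith
  have hσ12 : 1 / 2 ≤ σ := by nlinarith
  have hc1 : c ≤ 1 := Real.cos_le_one _
  have hπ : 0 < Real.pi := Real.pi_pos
  -- bound on S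
  have hSub : S ≤ 3 := by nlinarith
  have hSlb : σ * Y₀ ≤ S := by nlinarith [sq_nonneg σ, sq_nonneg Y₀, mul_nonneg hσ.le hY0.le]
  -- Xhat ≤ 3
  have hXub : Xhat β Y₀ ≤ 3 := by nlinarith
  -- bound ξ₀
  have harsinh : Real.arsinh (c / Y₀ * Xhat β Y₀) ≤ c / Y₀ * Xhat β Y₀ := by
    rw [← Real.sinh_le_sinh, Real.sinh_arsinh]
    exact Real.self_le_sinh_iff.mpr (by positivity)
  have hxiub : xiD Y₀ β ≤ 2 / Real.pi * (3 * c / a) := by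
    unfold xiD
    have h1 : c / Y₀ * Xhat β Y₀ ≤ 3 * c / a := by
      rw [div_mul_eq_mul_div, div_le_div_iff₀ hY0 ha]
      have := mul_le_mul_of_nonneg_left hXub hc.le
      nlinarith
    have := harsinh.trans h1
    have h2 : (0:ℝ) ≤ 2 / Real.pi := by positivity
    exact mul_le_mul_of_nonneg_left this h2
  have hxinn : 0 ≤ xiD Y₀ β := by
    unfold xiD
    apply mul_nonneg (by positivity)
    rw [Real.arsinh_nonneg_iff]
    positivity
  -- hCNK
  have hh : hCNK β = 4 * σ ^ 2 / (Real.pi * c ^ 3) := by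
    unfold hCNK
    rw [Real.tan_eq_sin_div_cos]
    change 4 / Real.pi * (σ / c) ^ 2 / c = _
    field_simp
  have hhpos : 0 < hCNK β := by rw [hh]; positivity
  -- bound on the ratio
  have hratio : xiD Y₀ β / hCNK β ≤ 2 * c / a := by
    rw [div_le_iff₀ hhpos, hh]
    calc xiD Y₀ β ≤ 2 / Real.pi * (3 * c / a) := hxiub
      _ ≤ 2 * c / a * (4 * σ ^ 2 / (Real.pi * c ^ 3)) := by
          have l1 : 2 / Real.pi * (3 * c / a) = 6 * c / (Real.pi * a) := by
            field_simp; ring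
          have r1 : 2 * c / a * (4 * σ ^ 2 / (Real.pi * c ^ 3))
              = 8 * σ ^ 2 / (Real.pi * a * c ^ 2) := by
            field_simp; ring
          rw [l1, r1, div_le_div_iff₀ (by positivity) (by positivity)]
          nlinarith [mul_nonneg (mul_pos hπ ha).le
            (show (0:ℝ) ≤ 8 * σ ^ 2 - 6 * c ^ 3 by nlinarith)]
  -- bound on |Xhat - sqrt(2Y₀ - Y₀²)|
  have hTnn : 0 ≤ 2 * Y₀ - Y₀ ^ 2 := by nlinarith
  have hXarg : 0 ≤ 2 * (S + c ^ 2) - Y₀ ^ 2 := by rw [← hX2]; positivity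
  have hσle1 : σ ≤ 1 := Real.sin_le_one _
  have hσYle : σ * Y₀ ≤ Y₀ := by
    have := mul_le_mul_of_nonneg_right hσle1 hY0.le
    linarith
  have hσY : 1 / 2 * a ≤ σ * Y₀ := mul_le_mul hσ12 hYa ha.le hσ.le
  have hSσ : S - σ * Y₀ ≤ 2 * c ^ 2 / a := by
    rw [le_div_iff₀ ha]
    have key : a * (S - σ * Y₀) ≤ 2 * c ^ 2 := by
      nlinarith [mul_nonneg (sub_nonneg.mpr hSlb)
        (show 0 ≤ S + σ * Y₀ - a / 2 by linarith [hS0])]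
    linarith [key]
  have h1σ : 1 - σ ≤ c ^ 2 := by
    have hp : 0 ≤ σ * (1 - σ) := mul_nonneg hσ.le (sub_nonneg.mpr hσle1)
    nlinarith [hp, hcs]
  have h6 : Y₀ * (1 - σ) ≤ 2 * c ^ 2 := by
    have := mul_le_mul_of_nonneg_right hY2 (sub_nonneg.mpr hσle1)
    nlinarith [this, h1σ]
  have h7 : (0:ℝ) ≤ c ^ 2 / a := by positivity
  have habsdiff : |2 * (S + c ^ 2) - Y₀ ^ 2 - (2 * Y₀ - Y₀ ^ 2)| ≤ c ^ 2 * (4 / a + 6) := by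
    have hexp : c ^ 2 * (4 / a + 6) = 4 * (c ^ 2 / a) + 6 * c ^ 2 := by ring
    rw [abs_le, hexp]
    constructor
    · linarith [hSlb, h6, h7, sq_nonneg c]
    · nlinarith [hSσ, hσYle, sq_nonneg c, h7, ha]
  have hXeq : Xhat β Y₀ = Real.sqrt (2 * (S + c ^ 2) - Y₀ ^ 2) := by
    rw [← hX2, Real.sqrt_sq hXnn]
  have hXdiff : |Xhat β Y₀ - Real.sqrt (2 * Y₀ - Y₀ ^ 2)| ≤ c * Real.sqrt (4 / a + 6) := by
    rw [hXeq]
    calc |Real.sqrt (2 * (S + c ^ 2) - Y₀ ^ 2) - Real.sqrt (2 * Y₀ - Y₀ ^ 2)|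
        ≤ Real.sqrt |2 * (S + c ^ 2) - Y₀ ^ 2 - (2 * Y₀ - Y₀ ^ 2)| :=
          abs_sqrt_sub_sqrt_le hXarg hTnn
      _ ≤ Real.sqrt (c ^ 2 * (4 / a + 6)) := Real.sqrt_le_sqrt habsdiff
      _ = c * Real.sqrt (4 / a + 6) := by
          rw [Real.sqrt_mul (sq_nonneg c), Real.sqrt_sq hc.le]
  -- conclusion
  have hrnn : 0 ≤ xiD Y₀ β / hCNK β := div_nonneg hxinn hhpos.le
  have htri : |xiD Y₀ β / hCNK β + Xhat β Y₀ - Real.sqrt (2 * Y₀ - Y₀ ^ 2)|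
      ≤ xiD Y₀ β / hCNK β + |Xhat β Y₀ - Real.sqrt (2 * Y₀ - Y₀ ^ 2)| := by
    have := abs_add_le (xiD Y₀ β / hCNK β) (Xhat β Y₀ - Real.sqrt (2 * Y₀ - Y₀ ^ 2))
    rw [abs_of_nonneg hrnn] at this
    calc |xiD Y₀ β / hCNK β + Xhat β Y₀ - Real.sqrt (2 * Y₀ - Y₀ ^ 2)|
        = |xiD Y₀ β / hCNK β + (Xhat β Y₀ - Real.sqrt (2 * Y₀ - Y₀ ^ 2))| := by ring_nf
      _ ≤ _ := this
  calc |xiD Y₀ β / hCNK β + Xhat β Y₀ - Real.sqrt (2 * Y₀ - Y₀ ^ 2)|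
      ≤ xiD Y₀ β / hCNK β + |Xhat β Y₀ - Real.sqrt (2 * Y₀ - Y₀ ^ 2)| := htri
    _ ≤ 2 * c / a + c * Real.sqrt (4 / a + 6) := add_le_add hratio hXdiff
    _ = c * (2 / a + Real.sqrt (4 / a + 6)) := by ring

theorem statement18 :
    -- (i) strict monotonicity of `Y(·,β)`
    (∀ β ∈ Ioo (0 : ℝ) 1, StrictAntiOn (Yfun β) (Ici (0 : ℝ))
      ∧ Yfun β 0 = 2 ∧ Tendsto (Yfun β) atTop (nhds 0))
    -- (ii) the inverse `ξ₀(Y₀,β)` and its explicit description, together with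
    -- (iii) the locally uniform limit of the rescaled horizontal coordinate
    ∧ ∃ xi : ℝ → ℝ → ℝ,
      (∀ β ∈ Ioo (0 : ℝ) 1, ∀ Y₀ ∈ Ioc (0 : ℝ) 2,
        xi Y₀ β ∈ Ici (0 : ℝ)
        ∧ Yfun β (xi Y₀ β) = Y₀
        ∧ (∀ ξ' ∈ Ici (0 : ℝ), Yfun β ξ' = Y₀ → ξ' = xi Y₀ β)
        ∧ Real.sinh (Real.pi * xi Y₀ β / 2) = Real.cos (Real.pi * β / 2) / Y₀ * Xhat β Y₀)
      ∧ (∀ ε > 0, ∀ a ∈ Ioc (0 : ℝ) 2, ∃ δ > 0, ∀ β ∈ Ioo (0 : ℝ) 1, 1 - δ < β →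
          ∀ Y₀ ∈ Icc a 2,
            |xi Y₀ β / hCNK β + Xhat β Y₀ - Real.sqrt (2 * Y₀ - Y₀ ^ 2)| < ε) := by
  constructor
  · intro β hβ
    exact ⟨yfun_anti hβ.1 hβ.2, yfun_zero hβ.1 hβ.2, yfun_tendsto hβ.1 hβ.2⟩
  refine ⟨xiD, ?_, ?_⟩
  · intro β hβ Y₀ hY₀
    obtain ⟨hnn, hY, hsinh⟩ := xiD_spec hβ.1 hβ.2 hY₀.1 hY₀.2
    refine ⟨hnn, hY, ?_, hsinh⟩
    intro ξ' hξ' hYξ'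
    exact (yfun_anti hβ.1 hβ.2).injOn hξ' hnn (by rw [hYξ', hY])
  · intro ε hε a ha
    set K := 2 / a + Real.sqrt (4 / a + 6) with hKdef
    have ha0 : 0 < a := ha.1
    have hK : 0 < K := by positivity
    set c₀ := min (1 / 2 : ℝ) (ε / (2 * K)) with hc₀def
    have hc₀ : 0 < c₀ := lt_min (by norm_num) (by positivity)
    refine ⟨2 * c₀ / Real.pi, by positivity, ?_⟩
    intro β hβ hβδ Y₀ hY₀
    have hπ : 0 < Real.pi := Real.pi_pos
    have hcβ : Real.cos (Real.pi * β / 2) < c₀ := by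
      have h1 : Real.cos (Real.pi * β / 2) = Real.sin (Real.pi * (1 - β) / 2) := by
        rw [show Real.pi * (1 - β) / 2 = Real.pi / 2 - Real.pi * β / 2 by ring,
          Real.sin_pi_div_two_sub]
      rw [h1]
      calc Real.sin (Real.pi * (1 - β) / 2) ≤ Real.pi * (1 - β) / 2 :=
            Real.sin_le (by nlinarith [hβ.2])
        _ < Real.pi * (2 * c₀ / Real.pi) / 2 := by
            have h2 : 1 - β < 2 * c₀ / Real.pi := by linarith [hβδ]
            have := mul_lt_mul_of_pos_left h2 hπ
            linarith
        _ = c₀ := by field_simp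
    have hc12 : Real.cos (Real.pi * β / 2) ≤ 1 / 2 :=
      le_of_lt (lt_of_lt_of_le hcβ (min_le_left _ _))
    have hbd := xiD_bound hβ.1 hβ.2 ha0 ha.2 hY₀.1 hY₀.2 hc12
    calc |xiD Y₀ β / hCNK β + Xhat β Y₀ - Real.sqrt (2 * Y₀ - Y₀ ^ 2)|
        ≤ Real.cos (Real.pi * β / 2) * K := hbd
      _ < c₀ * K := mul_lt_mul_of_pos_right hcβ hK
      _ ≤ ε / (2 * K) * K := mul_le_mul_of_nonneg_right (min_le_right _ _) hK.le
      _ = ε / 2 := by field_simp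
      _ < ε := by linarith
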